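/- Let F be a totally real number field of degree n with ring of integers 𝒪. Then there exists a family of group homomorphisms L_ι from the multiplicative group of nonzero fractional ideals of F to the additive group ℝ, indexed by the real embeddings ι : F → ℝ, such that: (a) for every nonzero fractional ideal 𝔞 of F, Σ_ι L_ι(𝔞) = log N(𝔞), where N(𝔞) is the absolute norm of 𝔞 and the sum is over all real embeddings of F; and (b) for every α ∈ F^×, there exist a totally positive unit ε of 𝒪 and a positive integer m such that L_ι((α)) = log|ι(α)| + (1/m)·log ι(ε) for every real embedding ι, where (α) denotes the principal fractional ideal generated by α. -/

import Mathlib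

open scoped BigOperators nonZeroDivisors
open NumberField

section Aux

variable {F : Type*} [Field F] [NumberField F] {n : ℕ}

/-- The log-embedding vector of a field element. -/
noncomputable def logVec (emb : Fin n → (F →+* ℝ)) (x : F) : Fin n → ℝ :=
  fun i => Real.log |emb i x|

variable (emb : Fin n → (F →+* ℝ))

omit [NumberField F] in
lemma emb_ne_zero (i : Fin n) {x : F} (hx : x ≠ 0) : emb i x ≠ 0 :=
  fun h => hx ((emb i).injective (by rw [h, map_zero]))

omit [NumberField F] in
lemma logVec_mul {x y : F} (hx : x ≠ 0) (hy : y ≠ 0) :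
    logVec emb (x * y) = logVec emb x + logVec emb y := by
  funext i
  simp only [logVec, Pi.add_apply, map_mul, abs_mul]
  exact Real.log_mul (abs_ne_zero.2 (emb_ne_zero emb i hx)) (abs_ne_zero.2 (emb_ne_zero emb i hy))

omit [NumberField F] in
lemma logVec_zpow (x : F) (k : ℤ) : logVec emb (x ^ k) = k • logVec emb x := by
  funext i
  have h1 : |emb i (x ^ k)| = |emb i x| ^ k := by
    rw [map_zpow₀]; exact map_zpow₀ (absHom : ℝ →*₀ ℝ) _ k
  simp only [logVec, Pi.smul_apply, smul_eq_mul]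
  rw [h1, Real.log_zpow, zsmul_eq_mul]

omit [NumberField F] in
lemma logVec_pow (x : F) (k : ℕ) : logVec emb (x ^ k) = k • logVec emb x := by
  have := logVec_zpow emb x (k : ℤ)
  rw [zpow_natCast] at this
  rw [this, natCast_zsmul]

omit [NumberField F] in
lemma logVec_one : logVec emb (1 : F) = 0 := by
  funext i; simp [logVec]

/-- The ℚ-span of the log-vectors of units. -/
noncomputable def unitLogSpan : Submodule ℚ (Fin n → ℝ) :=
  Submodule.span ℚ (Set.range fun u : (𝓞 F)ˣ => logVec emb ((u : 𝓞 F) : F))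

lemma logVec_unit_mem (u : (𝓞 F)ˣ) : logVec emb ((u : 𝓞 F) : F) ∈ unitLogSpan emb :=
  Submodule.subset_span ⟨u, rfl⟩

/-- Coercion of units to the field. -/
lemma units_coe_pow (u : (𝓞 F)ˣ) (k : ℕ) :
    (((u ^ k : (𝓞 F)ˣ) : 𝓞 F) : F) = (((u : 𝓞 F) : F)) ^ k := by
  rw [Units.val_pow_eq_pow_val, RingOfIntegers.coe_eq_algebraMap, map_pow]

lemma units_coe_mul (u v : (𝓞 F)ˣ) :
    (((u * v : (𝓞 F)ˣ) : 𝓞 F) : F) = ((u : 𝓞 F) : F) * ((v : 𝓞 F) : F) := by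
  rw [Units.val_mul, RingOfIntegers.coe_eq_algebraMap, map_mul]

lemma units_coe_zpow (u : (𝓞 F)ˣ) (k : ℤ) :
    (((u ^ k : (𝓞 F)ˣ) : 𝓞 F) : F) = (((u : 𝓞 F) : F)) ^ k := by
  show (((Units.map (algebraMap (𝓞 F) F).toMonoidHom (u ^ k)) : Fˣ) : F) = _
  rw [map_zpow, Units.val_zpow_eq_zpow_val]
  rfl

/-- Every element of `unitLogSpan` is `(1/m) • logVec u` for a unit `u` and `m ≥ 1`. -/
lemma unitLogSpan_rep {v : Fin n → ℝ} (hv : v ∈ unitLogSpan emb) :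
    ∃ (u : (𝓞 F)ˣ) (m : ℕ), 0 < m ∧ m • v = logVec emb ((u : 𝓞 F) : F) := by
  have hcoe_ne : ∀ u : (𝓞 F)ˣ, ((u : 𝓞 F) : F) ≠ 0 := fun u =>
    NumberField.Units.coe_ne_zero u
  have hpowN : ∀ (u : (𝓞 F)ˣ) (k : ℕ),
      logVec emb (((u ^ k : (𝓞 F)ˣ) : 𝓞 F) : F) = k • logVec emb ((u : 𝓞 F) : F) := by
    intro u k
    rw [units_coe_pow, logVec_pow]
  have hpowZ : ∀ (u : (𝓞 F)ˣ) (k : ℤ),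
      logVec emb (((u ^ k : (𝓞 F)ˣ) : 𝓞 F) : F) = k • logVec emb ((u : 𝓞 F) : F) := by
    intro u k
    rw [units_coe_zpow, logVec_zpow]
  refine Submodule.span_induction ?_ ?_ ?_ ?_ hv
  · rintro _ ⟨u, rfl⟩; exact ⟨u, 1, one_pos, one_smul _ _⟩
  · refine ⟨1, 1, one_pos, ?_⟩
    rw [one_smul, Units.val_one]
    have : ((1 : 𝓞 F) : F) = 1 := map_one _
    rw [this, logVec_one]
  · rintro v₁ v₂ _ _ ⟨u₁, m₁, hm₁, h₁⟩ ⟨u₂, m₂, hm₂, h₂⟩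
    refine ⟨u₁ ^ m₂ * u₂ ^ m₁, m₁ * m₂, Nat.mul_pos hm₁ hm₂, ?_⟩
    have c3 : logVec emb (((u₁ ^ m₂ * u₂ ^ m₁ : (𝓞 F)ˣ) : 𝓞 F) : F)
        = logVec emb (((u₁ ^ m₂ : (𝓞 F)ˣ) : 𝓞 F) : F)
          + logVec emb (((u₂ ^ m₁ : (𝓞 F)ˣ) : 𝓞 F) : F) := by
      rw [units_coe_mul, logVec_mul emb (hcoe_ne _) (hcoe_ne _)]
    rw [c3, hpowN, hpowN, ← h₁, ← h₂, smul_add, smul_smul, smul_smul,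
      Nat.mul_comm m₂ m₁, Nat.mul_comm m₁ m₂]
  · rintro q v₀ _ ⟨u, m, hm, h₁⟩
    refine ⟨u ^ q.num, m * q.den, Nat.mul_pos hm q.pos, ?_⟩
    rw [hpowZ, ← h₁]
    rw [← Nat.cast_smul_eq_nsmul ℚ (m * q.den) (q • v₀), smul_smul,
      ← Int.cast_smul_eq_zsmul ℚ q.num (m • v₀),
      ← Nat.cast_smul_eq_nsmul ℚ m v₀, smul_smul]
    congr 1
    push_cast
    rw [mul_assoc, mul_comm ((q.den : ℚ)) q, Rat.mul_den_eq_num]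
    ring

/-- A choice of nonzero generator for the `h`-th power of a fractional ideal, where `h` is the
class number. -/
lemma exists_gen (I : (FractionalIdeal (𝓞 F)⁰ F)ˣ) :
    ∃ x : F, x ≠ 0 ∧
      ((I ^ Fintype.card (ClassGroup (𝓞 F)) : (FractionalIdeal (𝓞 F)⁰ F)ˣ)
        : FractionalIdeal (𝓞 F)⁰ F) = FractionalIdeal.spanSingleton (𝓞 F)⁰ x := by
  set h := Fintype.card (ClassGroup (𝓞 F))
  have h1 : ClassGroup.mk F (I ^ h) = 1 := by rw [map_pow]; exact pow_card_eq_one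
  obtain ⟨x, hx⟩ := ClassGroup.mk_eq_one_iff.mp h1
  refine ⟨x, ?_, ?_⟩
  · rintro rfl
    apply Units.ne_zero (I ^ h)
    apply FractionalIdeal.coeToSubmodule_injective
    show ((I ^ h : (FractionalIdeal (𝓞 F)⁰ F)ˣ) : FractionalIdeal (𝓞 F)⁰ F).coeToSubmodule
      = ((0 : FractionalIdeal (𝓞 F)⁰ F)).coeToSubmodule
    rw [hx]
    simp
  · apply FractionalIdeal.coeToSubmodule_injective
    show _ = (FractionalIdeal.spanSingleton (𝓞 F)⁰ x).coeToSubmodule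
    rw [FractionalIdeal.coe_spanSingleton, ← hx]

/-- Chosen generator of `I ^ h`. -/
noncomputable def gen0 (I : (FractionalIdeal (𝓞 F)⁰ F)ˣ) : F := (exists_gen I).choose

lemma gen0_ne_zero (I : (FractionalIdeal (𝓞 F)⁰ F)ˣ) : gen0 I ≠ 0 :=
  (exists_gen I).choose_spec.1

lemma gen0_spec (I : (FractionalIdeal (𝓞 F)⁰ F)ˣ) :
    ((I ^ Fintype.card (ClassGroup (𝓞 F)) : (FractionalIdeal (𝓞 F)⁰ F)ˣ)
        : FractionalIdeal (𝓞 F)⁰ F) = FractionalIdeal.spanSingleton (𝓞 F)⁰ (gen0 I) :=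
  (exists_gen I).choose_spec.2

/-- logVec is well defined modulo `unitLogSpan` on generators of the same ideal. -/
lemma mkQ_logVec_eq {x y : F} (hx : x ≠ 0)
    (hxy : FractionalIdeal.spanSingleton (𝓞 F)⁰ x = FractionalIdeal.spanSingleton (𝓞 F)⁰ y) :
    (unitLogSpan emb).mkQ (logVec emb x) = (unitLogSpan emb).mkQ (logVec emb y) := by
  obtain ⟨z, hz⟩ := FractionalIdeal.spanSingleton_eq_spanSingleton.mp hxy
  have hy : y = ((z : 𝓞 F) : F) * x := by
    rw [← hz, Units.smul_def, Algebra.smul_def]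
  rw [hy, logVec_mul emb (NumberField.Units.coe_ne_zero z) hx, map_add]
  have h0 : (unitLogSpan emb).mkQ (logVec emb ((z : 𝓞 F) : F)) = 0 := by
    rw [Submodule.mkQ_apply, Submodule.Quotient.mk_eq_zero]
    exact logVec_unit_mem emb z
  rw [h0, zero_add]

/-- The quotient-valued homomorphism on the group of nonzero fractional ideals. -/
noncomputable def logQuot (I : (FractionalIdeal (𝓞 F)⁰ F)ˣ) : (Fin n → ℝ) ⧸ unitLogSpan emb :=
  ((Fintype.card (ClassGroup (𝓞 F)) : ℚ))⁻¹ • (unitLogSpan emb).mkQ (logVec emb (gen0 I))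

lemma logQuot_mul (I J : (FractionalIdeal (𝓞 F)⁰ F)ˣ) :
    logQuot emb (I * J) = logQuot emb I + logQuot emb J := by
  have hspanIJ : FractionalIdeal.spanSingleton (𝓞 F)⁰ (gen0 (I * J))
      = FractionalIdeal.spanSingleton (𝓞 F)⁰ (gen0 I * gen0 J) := by
    rw [← FractionalIdeal.spanSingleton_mul_spanSingleton, ← gen0_spec, ← gen0_spec,
      ← gen0_spec, mul_pow, Units.val_mul]
  have h2 := mkQ_logVec_eq emb (gen0_ne_zero (I * J)) hspanIJ
  rw [logVec_mul emb (gen0_ne_zero I) (gen0_ne_zero J), map_add] at h2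
  rw [logQuot, logQuot, logQuot, h2, smul_add]

lemma logQuot_principal (α : F) (hα : α ≠ 0) (U : (FractionalIdeal (𝓞 F)⁰ F)ˣ)
    (hU : (U : FractionalIdeal (𝓞 F)⁰ F) = FractionalIdeal.spanSingleton (𝓞 F)⁰ α) :
    logQuot emb U = (unitLogSpan emb).mkQ (logVec emb α) := by
  set h := Fintype.card (ClassGroup (𝓞 F)) with hh
  have hhpos : 0 < h := Fintype.card_pos
  have hspanU : FractionalIdeal.spanSingleton (𝓞 F)⁰ (gen0 U)
      = FractionalIdeal.spanSingleton (𝓞 F)⁰ (α ^ h) := by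
    rw [← FractionalIdeal.spanSingleton_pow, ← hU, ← gen0_spec, Units.val_pow_eq_pow_val]
  have h2 := mkQ_logVec_eq emb (gen0_ne_zero U) hspanU
  rw [logVec_pow, map_nsmul] at h2
  rw [logQuot, ← hh, h2, ← Nat.cast_smul_eq_nsmul ℚ, smul_smul,
    inv_mul_cancel₀ (by exact_mod_cast hhpos.ne'), one_smul]

end Aux

/-- Summation of coordinates, as a ℚ-linear map. -/
noncomputable def sumLin (n : ℕ) : (Fin n → ℝ) →ₗ[ℚ] ℝ where
  toFun v := ∑ i, v i
  map_add' v w := by simp [Finset.sum_add_distrib]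
  map_smul' q v := by simp [Finset.mul_sum, Rat.smul_def]

lemma sumLin_apply {n : ℕ} (v : Fin n → ℝ) : sumLin n v = ∑ i, v i := rfl

/-- for a totally real number field `F` of degree `n` (given by a bijective
enumeration `emb : Fin n → (F →+* ℝ)` of its real embeddings, with `n` the degree), there is
a family of additive maps `L i` on the group of invertible (i.e. nonzero) fractional ideals
of `F` such that `∑ i, L i I = log N(I)` for every nonzero fractional ideal `I`, and for
every `α ∈ Fˣ` there are a totally positive unit `ε` of `𝓞 F` and `m ≥ 1` with
`L i ((α)) = log |ι_i(α)| + (1/m) log ι_i(ε)` for every real embedding `ι_i`. -/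
theorem exists_log_emb_fractionalIdeal (F : Type*) [Field F] [NumberField F] (n : ℕ)
    (hdeg : Module.finrank ℚ F = n)
    (emb : Fin n → (F →+* ℝ)) (hemb : Function.Bijective emb) :
    ∃ L : Fin n → (FractionalIdeal (𝓞 F)⁰ F)ˣ → ℝ,
      (∀ i, ∀ I J : (FractionalIdeal (𝓞 F)⁰ F)ˣ, L i (I * J) = L i I + L i J) ∧
      (∀ I : (FractionalIdeal (𝓞 F)⁰ F)ˣ,
        ∑ i, L i I = Real.log ((FractionalIdeal.absNorm (I : FractionalIdeal (𝓞 F)⁰ F) : ℝ))) ∧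
      (∀ (α : F), α ≠ 0 → ∀ U : (FractionalIdeal (𝓞 F)⁰ F)ˣ,
        (U : FractionalIdeal (𝓞 F)⁰ F) = FractionalIdeal.spanSingleton (𝓞 F)⁰ α →
        ∃ (ε : (𝓞 F)ˣ) (m : ℕ), 0 < m ∧
          (∀ i, 0 < emb i ((ε : 𝓞 F) : F)) ∧
          (∀ i, L i U = Real.log |emb i α|
            + (1 / (m : ℝ)) * Real.log (emb i ((ε : 𝓞 F) : F)))) := by
  classical
  -- product formula
  have hprod : ∀ x : F, ((Algebra.norm ℚ x : ℚ) : ℝ) = ∏ i, emb i x := by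
    intro x
    set j : Fin n → (F →+* ℂ) := fun i => Complex.ofRealHom.comp (emb i) with hj
    have hjinj : Function.Injective j := by
      intro i i' hii
      exact hemb.injective (RingHom.ext fun y =>
        Complex.ofReal_injective (RingHom.congr_fun hii y))
    have hjbij : Function.Bijective j :=
      (Fintype.bijective_iff_injective_and_card j).mpr
        ⟨hjinj, by rw [Fintype.card_fin, NumberField.Embeddings.card F ℂ, hdeg]⟩
    have h1 : algebraMap ℚ ℂ (Algebra.norm ℚ x) = ∏ σ : F →ₐ[ℚ] ℂ, σ x :=
      Algebra.norm_eq_prod_embeddings ℚ ℂ x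
    have h2 : ∏ σ : F →ₐ[ℚ] ℂ, σ x = ∏ φ : F →+* ℂ, φ x :=
      (Fintype.prod_equiv (RingHom.equivRatAlgHom F ℂ) (fun φ => φ x) (fun σ => σ x)
        (fun φ => rfl)).symm
    have h3 : ∏ φ : F →+* ℂ, φ x = ∏ i, j i x :=
      (Fintype.prod_equiv (Equiv.ofBijective j hjbij) (fun i => j i x) (fun φ => φ x)
        (fun i => rfl)).symm
    have h4 : (((Algebra.norm ℚ x : ℚ) : ℝ) : ℂ) = ((∏ i, emb i x : ℝ) : ℂ) := by
      rw [Complex.ofReal_prod]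
      rw [h2, h3] at h1
      simpa [hj] using h1
    exact_mod_cast h4
  have habs : ∀ x : F, |((Algebra.norm ℚ x : ℚ) : ℝ)| = ∏ i, |emb i x| := by
    intro x; rw [hprod x, Finset.abs_prod]
  have hsumlog : ∀ x : F, x ≠ 0 →
      ∑ i, logVec emb x i = Real.log |((Algebra.norm ℚ x : ℚ) : ℝ)| := by
    intro x hx
    rw [habs, Real.log_prod (fun i _ => abs_ne_zero.2 (emb_ne_zero emb i hx))]
    rfl
  set W : Submodule ℚ (Fin n → ℝ) := unitLogSpan emb with hW
  have hWker : W ≤ LinearMap.ker (sumLin n) := by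
    rw [hW, unitLogSpan, Submodule.span_le]
    rintro _ ⟨u, rfl⟩
    have hnorm : |Algebra.norm ℚ ((u : 𝓞 F) : F)| = 1 := NumberField.Units.norm F u
    have : ∑ i, logVec emb ((u : 𝓞 F) : F) i = 0 := by
      rw [hsumlog _ (NumberField.Units.coe_ne_zero u), ← Rat.cast_abs, hnorm]
      simp
    simpa [LinearMap.mem_ker, sumLin_apply] using this
  -- section of the quotient map
  obtain ⟨s, hs⟩ := W.mkQ.exists_rightInverse_of_surjective
    (LinearMap.range_eq_top.2 W.mkQ_surjective)
  have hs' : ∀ v, W.mkQ (s v) = v := fun v => LinearMap.congr_fun hs v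
  set h : ℕ := Fintype.card (ClassGroup (𝓞 F)) with hh
  have hhpos : 0 < h := Fintype.card_pos
  refine ⟨fun i I => s (logQuot emb I) i, ?_, ?_, ?_⟩
  · intro i I J
    show s (logQuot emb (I * J)) i = s (logQuot emb I) i + s (logQuot emb J) i
    rw [logQuot_mul, map_add]; rfl
  · intro I
    show ∑ i, s (logQuot emb I) i = _
    have e1 : ∑ i, s (logQuot emb I) i = sumLin n (s (logQuot emb I)) := rfl
    have e2 : sumLin n (s (logQuot emb I)) = W.liftQ (sumLin n) hWker (logQuot emb I) := by
      conv_rhs => rw [← hs' (logQuot emb I)]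
      rw [Submodule.mkQ_apply, Submodule.liftQ_apply]
    have e3 : sumLin n (logVec emb (gen0 I)) = Real.log (((FractionalIdeal.absNorm
        ((I : FractionalIdeal (𝓞 F)⁰ F)) : ℚ) : ℝ)) * h := by
      rw [sumLin_apply, hsumlog _ (gen0_ne_zero I), ← Rat.cast_abs,
        ← FractionalIdeal.absNorm_span_singleton (𝓞 F), ← gen0_spec I, ← hh,
        Units.val_pow_eq_pow_val, map_pow]
      push_cast
      rw [Real.log_pow]
      ring
    rw [e1, e2, logQuot, ← hh]
    rw [map_smul, Submodule.mkQ_apply, Submodule.liftQ_apply, e3, Rat.smul_def]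
    push_cast
    rw [inv_mul_eq_div, mul_div_assoc, div_self (by exact_mod_cast hhpos.ne' : (h:ℝ) ≠ 0),
      mul_one]
  · intro α hα U hU
    have hLU : logQuot emb U = W.mkQ (logVec emb α) := logQuot_principal emb α hα U hU
    set w : Fin n → ℝ := s (W.mkQ (logVec emb α)) - logVec emb α with hw
    have hwW : w ∈ W := by
      rw [← Submodule.Quotient.mk_eq_zero, ← Submodule.mkQ_apply, hw, map_sub, hs', sub_self]
    obtain ⟨u, m, hm, hmw⟩ := unitLogSpan_rep emb hwW
    refine ⟨u ^ 2, 2 * m, by positivity, ?_, ?_⟩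
    · intro i
      have hε : (((u ^ 2 : (𝓞 F)ˣ) : 𝓞 F) : F) = (((u : 𝓞 F) : F)) ^ 2 :=
        units_coe_pow u 2
      rw [hε, map_pow]
      have := emb_ne_zero emb i (NumberField.Units.coe_ne_zero u)
      positivity
    · intro i
      show s (logQuot emb U) i = _
      have hLiU : s (logQuot emb U) i = logVec emb α i + w i := by
        rw [hLU, hw]; simp
      have hwi : (m : ℝ) * w i = Real.log |emb i ((u : 𝓞 F) : F)| := by
        have := congrFun hmw i
        simpa [logVec] using this
      have hε : (((u ^ 2 : (𝓞 F)ˣ) : 𝓞 F) : F) = (((u : 𝓞 F) : F)) ^ 2 :=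
        units_coe_pow u 2
      have hlogε : Real.log (emb i (((u ^ 2 : (𝓞 F)ˣ) : 𝓞 F) : F))
          = 2 * Real.log |emb i ((u : 𝓞 F) : F)| := by
        rw [hε, map_pow, Real.log_pow, Real.log_abs]
        push_cast; ring
      rw [hLiU, hlogε]
      have hfαi : logVec emb α i = Real.log |emb i α| := rfl
      rw [hfαi]
      have hm' : (m : ℝ) ≠ 0 := by exact_mod_cast hm.ne'
      have hwival : w i = Real.log |emb i ((u : 𝓞 F) : F)| / m := by
        rw [eq_div_iff hm']
        linarith [hwi]
      rw [hwival]
      push_cast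
      field_simp
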